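/- Let C0 and C_infty be two distinct conics of a circumscribed bundle of PG(2,q) with q odd, and let P be a point of PG(2,q). Then the polar line of P with respect to C0 is different from the polar line of P with respect to C_infty. Equivalently, the projectivity obtained as the product of the two polarities associated with C0 and C_infty is fixed-point free on PG(2,q). -/

import Mathlib

/-- Evaluation of the ternary quadratic form with coefficient vector
`a = (a11,a22,a33,a12,a13,a23)` at `x = (x1,x2,x3)`. -/
def Qeval {F : Type*} [CommRing F] (a : Fin 6 → F) (x : Fin 3 → F) : F :=
  a 0 * x 0 ^ 2 + a 1 * x 1 ^ 2 + a 2 * x 2 ^ 2 +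
    a 3 * x 0 * x 1 + a 4 * x 0 * x 2 + a 5 * x 1 * x 2

/-- The symmetric matrix associated (for odd characteristic) to the ternary
quadratic form with coefficients `(a11,a22,a33,a12,a13,a23)`. -/
def Msym {F : Type*} [Field F] (a : Fin 6 → F) : Matrix (Fin 3) (Fin 3) F :=
  !![a 0, a 3 / 2, a 4 / 2;
     a 3 / 2, a 1, a 5 / 2;
     a 4 / 2, a 5 / 2, a 2]

open Matrix in
lemma dot_Msym_self {F : Type*} [Field F] (h2 : (2:F) ≠ 0) (a : Fin 6 → F) (x : Fin 3 → F) :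
    x ⬝ᵥ (Msym a).mulVec x = Qeval a x := by
  simp [Msym, Qeval, Matrix.mulVec, dotProduct, Fin.sum_univ_three]
  field_simp
  ring

open Matrix in
lemma dot_Msym_symm {F : Type*} [Field F] (a : Fin 6 → F) (x y : Fin 3 → F) :
    x ⬝ᵥ (Msym a).mulVec y = y ⬝ᵥ (Msym a).mulVec x := by
  simp [Msym, Matrix.mulVec, dotProduct, Fin.sum_univ_three]
  ring

open Matrix in
lemma dot_Msym_map {F E : Type*} [Field F] [Field E] [Algebra F E] (σ : E ≃ₐ[F] E)
    (a : Fin 6 → F) (x y : Fin 3 → E) :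
    σ (x ⬝ᵥ (Msym fun i => algebraMap F E (a i)).mulVec y)
      = (fun i => σ (x i)) ⬝ᵥ (Msym fun i => algebraMap F E (a i)).mulVec
          (fun i => σ (y i)) := by
  simp [Msym, Matrix.mulVec, dotProduct, Fin.sum_univ_three, map_add,
    _root_.map_mul, map_div₀, map_ofNat, AlgEquiv.commutes]

open Matrix in
lemma gram_apply {E : Type*} [Field E] (B M : Matrix (Fin 3) (Fin 3) E) (i j : Fin 3) :
    (B * M * Bᵀ) i j = (B i) ⬝ᵥ M.mulVec (B j) := by
  simp [Matrix.mul_apply, Matrix.mulVec, dotProduct, Fin.sum_univ_three,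
    Matrix.transpose_apply]
  ring

lemma Msym_map {F E : Type*} [Field F] [Field E] [Algebra F E] (a : Fin 6 → F) :
    (Msym fun i => algebraMap F E (a i)) = (Msym a).map (algebraMap F E) := by
  ext i j
  fin_cases i <;> fin_cases j <;>
    simp [Msym, Matrix.map_apply, map_div₀, map_ofNat]

open Matrix

/-- Let `q` be odd and let `C0`, `C∞` be two distinct conics of a
circumscribed bundle of PG(2,q): both are nondegenerate, and both pass,
over GF(q^3), through the vertices `V, V^σ, V^{σ²}` of a triangle fixed
(as a set) by the Frobenius collineation `σ : x ↦ x^q`, where the vertex `V`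
is not a point of PG(2,q).  Then for every point `P` of PG(2,q) the polar
lines `Msym a0 * P` and `Msym a∞ * P` of `P` with respect to the two conics
are distinct; equivalently, the product of the two polarities is a
fixed-point-free projectivity of PG(2,q). -/
theorem polar_lines_distinct_odd (F E : Type*) [Field F] [Fintype F] [Field E]
    [Fintype E] [Algebra F E] (q : ℕ) (hq : Fintype.card F = q) (hodd : Odd q)
    (hE : Fintype.card E = q ^ 3)
    (σ : E ≃ₐ[F] E) (hσ : ∀ x : E, σ x = x ^ q)
    (V : Fin 3 → E) (hV : V ≠ 0)
    (htri : LinearIndependent E ![V, fun i => σ (V i), fun i => σ (σ (V i))])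
    (hVirr : ¬ ∃ (w : Fin 3 → F) (c : E), c ≠ 0 ∧
      V = c • fun i => algebraMap F E (w i))
    (a0 ainf : Fin 6 → F)
    (h0nd : (Msym a0).det ≠ 0) (hinfnd : (Msym ainf).det ≠ 0)
    (hdist : ¬ ∃ c : F, ainf = c • a0)
    (h0thru : Qeval (fun i => algebraMap F E (a0 i)) V = 0 ∧
      Qeval (fun i => algebraMap F E (a0 i)) (fun i => σ (V i)) = 0 ∧
      Qeval (fun i => algebraMap F E (a0 i)) (fun i => σ (σ (V i))) = 0)
    (hinfthru : Qeval (fun i => algebraMap F E (ainf i)) V = 0 ∧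
      Qeval (fun i => algebraMap F E (ainf i)) (fun i => σ (V i)) = 0 ∧
      Qeval (fun i => algebraMap F E (ainf i)) (fun i => σ (σ (V i))) = 0) :
    ∀ P : Fin 3 → F, P ≠ 0 →
      (¬ ∃ c : F, (Msym ainf).mulVec P = c • (Msym a0).mulVec P) ∧
      ¬ ∃ c : F, (Msym a0)⁻¹.mulVec ((Msym ainf).mulVec P) = c • P := by
  obtain ⟨h01, h02, h03⟩ := h0thru
  obtain ⟨hi1, hi2, hi3⟩ := hinfthru
  -- characteristic facts
  have h2F : (2 : F) ≠ 0 := by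
    apply Ring.two_ne_zero
    intro hch
    have := FiniteField.even_card_of_char_two hch
    rw [hq] at this
    have hq1 : q % 2 = 1 := Nat.odd_iff.mp hodd
    omega
  have h2E : (2 : E) ≠ 0 := by
    intro h
    apply h2F
    apply (algebraMap F E).injective
    rw [map_ofNat, map_zero, h]
  -- σ has order dividing 3
  have hσ3 : ∀ x : E, σ (σ (σ x)) = x := by
    intro x
    rw [hσ, hσ, hσ, ← pow_mul, ← pow_mul]
    have hqq : q * (q * q) = Fintype.card E := by rw [hE]; ring
    rw [hqq, FiniteField.pow_card]
  -- the key claim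
  have key : ∀ P : Fin 3 → F, P ≠ 0 → ∀ c : F,
      (Msym ainf).mulVec P ≠ c • (Msym a0).mulVec P := by
    intro P hP c hc
    apply hdist
    refine ⟨c, ?_⟩
    set n : Fin 6 → F := fun i => ainf i - c * a0 i with hn
    have hMsub : Msym n = Msym ainf - c • Msym a0 := by
      ext i j
      fin_cases i <;> fin_cases j <;> simp [Msym, hn] <;> ring
    have hMn : (Msym n).mulVec P = 0 := by
      rw [hMsub, Matrix.sub_mulVec, Matrix.smul_mulVec, hc, sub_self]
    have hdet : (Msym n).det = 0 :=
      Matrix.exists_mulVec_eq_zero_iff.mp ⟨P, hP, hMn⟩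
    set ME := Msym fun i => algebraMap F E (n i) with hME
    have hdetE : ME.det = 0 := by
      rw [hME, Msym_map, ← RingHom.mapMatrix_apply, ← RingHom.map_det, hdet, map_zero]
    -- Qeval is linear in the coefficient vector
    have hQlin : ∀ x : Fin 3 → E, Qeval (fun i => algebraMap F E (n i)) x
        = Qeval (fun i => algebraMap F E (ainf i)) x - algebraMap F E c * Qeval (fun i => algebraMap F E (a0 i)) x := by
      intro x
      simp only [Qeval, hn, map_sub, _root_.map_mul]
      ring
    have hd1 : Qeval (fun i => algebraMap F E (n i)) V = 0 := by
      rw [hQlin, hi1, h01]; ring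
    have hd2 : Qeval (fun i => algebraMap F E (n i)) (fun i => σ (V i)) = 0 := by
      rw [hQlin, hi2, h02]; ring
    have hd3 : Qeval (fun i => algebraMap F E (n i)) (fun i => σ (σ (V i))) = 0 := by
      rw [hQlin, hi3, h03]; ring
    -- the basis matrix
    set B : Matrix (Fin 3) (Fin 3) E :=
      Matrix.of ![V, fun i => σ (V i), fun i => σ (σ (V i))] with hB
    have hBrows : ∀ i, B i = ![V, fun i => σ (V i), fun i => σ (σ (V i))] i :=
      fun i => rfl
    have hBu : IsUnit B := by
      rw [← Matrix.linearIndependent_rows_iff_isUnit]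
      exact htri
    have hBdet : IsUnit B.det := (Matrix.isUnit_iff_isUnit_det B).mp hBu
    -- the Gram entries
    set b : E := V ⬝ᵥ ME.mulVec (fun i => σ (V i)) with hb
    have hb2 : (fun i => σ (V i)) ⬝ᵥ ME.mulVec (fun i => σ (σ (V i))) = σ b := by
      rw [hb, hME, dot_Msym_map]
    have hb3 : (fun i => σ (σ (V i))) ⬝ᵥ ME.mulVec V = σ (σ b) := by
      have h := dot_Msym_map σ n (fun i => σ (V i)) (fun i => σ (σ (V i)))
      rw [← hME, hb2] at h
      simp only [hσ3] at h
      exact h.symm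
    have hG : B * ME * Bᵀ = !![0, b, σ (σ b); b, 0, σ b; σ (σ b), σ b, 0] := by
      ext i j
      rw [_root_.gram_apply]
      fin_cases i <;> fin_cases j
      · show V ⬝ᵥ ME.mulVec V = 0
        rw [hME, dot_Msym_self h2E]; exact hd1
      · exact hb.symm
      · show V ⬝ᵥ ME.mulVec (fun i => σ (σ (V i))) = σ (σ b)
        rw [hME, dot_Msym_symm, ← hME]; exact hb3
      · show (fun i => σ (V i)) ⬝ᵥ ME.mulVec V = b
        rw [hME, dot_Msym_symm, ← hME]
      · show (fun i => σ (V i)) ⬝ᵥ ME.mulVec (fun i => σ (V i)) = 0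
        rw [hME, dot_Msym_self h2E]; exact hd2
      · exact hb2
      · exact hb3
      · show (fun i => σ (σ (V i))) ⬝ᵥ ME.mulVec (fun i => σ (V i)) = σ b
        rw [hME, dot_Msym_symm, ← hME]; exact hb2
      · show (fun i => σ (σ (V i))) ⬝ᵥ ME.mulVec (fun i => σ (σ (V i))) = 0
        rw [hME, dot_Msym_self h2E]; exact hd3
    have hdetG : (B * ME * Bᵀ).det = 0 := by
      rw [Matrix.det_mul, Matrix.det_mul, hdetE, mul_zero, zero_mul]
    have hprod : (2 : E) * (b * (σ b * σ (σ b))) = 0 := by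
      rw [hG, Matrix.det_fin_three] at hdetG
      simp at hdetG
      linear_combination hdetG
    have hbz : b = 0 := by
      rcases mul_eq_zero.mp hprod with h | h
      · exact absurd h h2E
      rcases mul_eq_zero.mp h with h | h
      · exact h
      rcases mul_eq_zero.mp h with h | h
      · exact σ.injective (by simpa using h)
      · have h1 : σ b = 0 := σ.injective (by simpa using h)
        exact σ.injective (by simpa using h1)
    have hG0 : B * ME * Bᵀ = 0 := by
      rw [hG, hbz, map_zero, map_zero]
      ext i j
      fin_cases i <;> fin_cases j <;> rfl
    have hME0 : ME = 0 := by
      have h1 : ME * Bᵀ = 0 := by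
        have := congrArg (fun X => B⁻¹ * X) hG0
        simpa [Matrix.mul_assoc, Matrix.nonsing_inv_mul_cancel_left _ _ hBdet]
          using this
      have := congrArg (fun X => X * Bᵀ⁻¹) h1
      simpa [Matrix.mul_nonsing_inv_cancel_right _ _
        (by rwa [Matrix.det_transpose] : IsUnit Bᵀ.det)] using this
    have hMn0 : Msym n = 0 := by
      have hmap : (Msym n).map (algebraMap F E) = 0 := by
        rw [← Msym_map, ← hME]
        exact hME0
      ext i j
      have h2 : algebraMap F E ((Msym n) i j) = 0 := by
        have := congrFun (congrFun hmap i) j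
        simpa [Matrix.map_apply] using this
      have h3 : (Msym n) i j = 0 := (algebraMap F E).injective (by rw [h2, map_zero])
      simpa using h3
    have hn6 : ∀ i, n i = 0 := by
      have e : ∀ i j, (Msym n) i j = (0 : F) := by
        intro i j; rw [hMn0]; rfl
      intro i
      fin_cases i
      · simpa [Msym] using e 0 0
      · simpa [Msym] using e 1 1
      · simpa [Msym] using e 2 2
      · have h := e 0 1
        simp only [Msym, Matrix.cons_val_zero, Matrix.cons_val_one, Matrix.head_cons,
          Matrix.of_apply] at h
        rcases div_eq_zero_iff.mp h with h | h
        · exact h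
        · exact absurd h h2F
      · have h := e 0 2
        simp only [Msym, Matrix.cons_val_zero, Matrix.cons_val_one, Matrix.head_cons,
          Matrix.cons_val_two, Matrix.tail_cons, Matrix.of_apply] at h
        rcases div_eq_zero_iff.mp h with h | h
        · exact h
        · exact absurd h h2F
      · have h := e 1 2
        simp only [Msym, Matrix.cons_val_zero, Matrix.cons_val_one, Matrix.head_cons,
          Matrix.cons_val_two, Matrix.tail_cons, Matrix.of_apply] at h
        rcases div_eq_zero_iff.mp h with h | h
        · exact h
        · exact absurd h h2F
    funext i
    have hthis : ainf i - c * a0 i = 0 := hn6 i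
    simp only [Pi.smul_apply, smul_eq_mul]
    linear_combination hthis
  -- conclude
  intro P hP
  constructor
  · rintro ⟨c, hc⟩
    exact key P hP c hc
  · rintro ⟨c, hc⟩
    apply key P hP c
    have hu : IsUnit (Msym a0).det := isUnit_iff_ne_zero.mpr h0nd
    have h1 : (Msym a0).mulVec ((Msym a0)⁻¹.mulVec ((Msym ainf).mulVec P))
        = (Msym ainf).mulVec P := by
      rw [Matrix.mulVec_mulVec, Matrix.mul_nonsing_inv _ hu, Matrix.one_mulVec]
    rw [hc] at h1
    rw [← h1, Matrix.mulVec_smul]
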